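/- arXiv:1611.04638 — 2 statements merged into one kernel-verified Lean document; each statement's English description precedes it below -/
import Mathlib

section
/- (Piecewise formula for CR_a, from the proof of Lemma 2.) Fix an integer n ≥ 1, σ > 0, λ > 0, α ∈ (0,1), θ > 0 and ν ≥ 0, and let μ = N(θ, σ²/n). Then μ({x ∈ ℝ : |x − θ| < z_{α/2}·σ̃(θ)/√n and |x| > ν}) = CR_a(θ, ν), where CR_a(θ, ν) = (P_s(θ,ν) − 2Φ(−z_{α/2}σ̃(θ)/σ))·1{ν < z_{α/2}σ̃(θ)/√n} if θ < |ν − z_{α/2}σ̃(θ)/√n|; CR_a(θ, ν) = Φ(z_{α/2}σ̃(θ)/σ) − Φ(√n(ν − θ)/σ) if |ν − z_{α/2}σ̃(θ)/√n| ≤ θ ≤ ν + z_{α/2}σ̃(θ)/√n; and CR_a(θ, ν) = 1 − 2Φ(−z_{α/2}σ̃(θ)/σ) if θ > ν + z_{α/2}σ̃(θ)/√n. -/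
open MeasureTheory ProbabilityTheory

/-- The standard normal cumulative distribution function. -/
noncomputable def Phi (x : ℝ) : ℝ := (gaussianReal 0 1 (Set.Iic x)).toReal

/-- P_s(θ,ν) = Φ(√n(θ − ν)/σ) + Φ(√n(−θ − ν)/σ). -/
noncomputable def Ps (n : ℕ) (σ θ ν : ℝ) : ℝ :=
  Phi (Real.sqrt n * (θ - ν) / σ) + Phi (Real.sqrt n * (-θ - ν) / σ)

/-- σ̃(θ) = (1 + λ/θ²)⁻¹ σ for θ ≠ 0, with the convention σ̃(0) = 0. -/
noncomputable def sigTilde (lam σ θ : ℝ) : ℝ :=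
  if θ = 0 then 0 else (1 + lam / θ ^ 2)⁻¹ * σ

open Classical in
/-- The piecewise function CR_a(θ,ν); here `za` denotes the quantile z_{α/2}. -/
noncomputable def CRa (n : ℕ) (σ lam za θ ν : ℝ) : ℝ :=
  if θ < |ν - za * sigTilde lam σ θ / Real.sqrt n| then
    (Ps n σ θ ν - 2 * Phi (-(za * sigTilde lam σ θ / σ))) *
      (if ν < za * sigTilde lam σ θ / Real.sqrt n then 1 else 0)
  else if θ ≤ ν + za * sigTilde lam σ θ / Real.sqrt n then
    Phi (za * sigTilde lam σ θ / σ) - Phi (Real.sqrt n * (ν - θ) / σ)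
  else 1 - 2 * Phi (-(za * sigTilde lam σ θ / σ))

open Classical in
/-- The piecewise function CR_b(θ,ν); here `za` denotes the quantile z_{α/2}. -/
noncomputable def CRb (n : ℕ) (σ α za θ ν : ℝ) : ℝ :=
  if θ < |ν - za * σ / Real.sqrt n| then
    (Ps n σ θ ν - α) * (if ν < za * σ / Real.sqrt n then 1 else 0)
  else if θ ≤ ν + za * σ / Real.sqrt n then
    1 - α / 2 - Phi (Real.sqrt n * (ν - θ) / σ)
  else 1 - α

instance : NullSingletonClass (gaussianReal 0 1) :=
  ⟨fun x => gaussianReal_absolutelyContinuous 0 one_ne_zero (Real.volume_singleton)⟩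

lemma phi_mono : Monotone Phi := fun a b h =>
  ENNReal.toReal_mono (measure_ne_top _ _) (measure_mono (Set.Iic_subset_Iic.2 h))

lemma gauss_Ioo (a b : ℝ) (h : a ≤ b) :
    (gaussianReal 0 1 (Set.Ioo a b)).toReal = Phi b - Phi a := by
  rw [measure_congr Ioo_ae_eq_Ioc, ← Set.Iic_sdiff_Iic,
    measure_diff (Set.Iic_subset_Iic.2 h) measurableSet_Iic.nullMeasurableSet (measure_ne_top _ _),
    ENNReal.toReal_sub_of_le (measure_mono (Set.Iic_subset_Iic.2 h)) (measure_ne_top _ _)]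
  rfl

lemma Phi_neg (x : ℝ) : Phi (-x) = 1 - Phi x := by
  have hmap : (gaussianReal 0 1).map (fun y => (-1:ℝ) * y) = gaussianReal 0 1 := by
    rw [gaussianReal_map_const_mul]
    norm_num
  have h1 : gaussianReal 0 1 (Set.Iic (-x)) = gaussianReal 0 1 (Set.Ici x) := by
    conv_lhs => rw [← hmap]
    rw [Measure.map_apply (by fun_prop) measurableSet_Iic]
    congr 1
    ext y
    simp only [Set.mem_preimage, Set.mem_Iic, Set.mem_Ici]
    constructor <;> intro <;> linarith
  have h2 : gaussianReal 0 1 (Set.Ici x) = 1 - gaussianReal 0 1 (Set.Iic x) := by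
    rw [← Set.compl_Iio, measure_compl measurableSet_Iio (measure_ne_top _ _),
      measure_congr Iio_ae_eq_Iic, measure_univ]
  unfold Phi
  rw [h1, h2, ENNReal.toReal_sub_of_le (by exact prob_le_one) (by norm_num)]
  norm_num

lemma Phi_zero : Phi 0 = 1/2 := by
  have := Phi_neg 0; rw [neg_zero] at this; linarith

lemma gauss_affine (m s : ℝ) (hs : 0 < s) {S : Set ℝ} (hS : MeasurableSet S) :
    gaussianReal m (Real.toNNReal (s^2)) S
      = gaussianReal 0 1 ((fun x => s * x + m) ⁻¹' S) := by
  have h1 : (gaussianReal 0 1).map (fun x => s * x + m)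
      = gaussianReal m (Real.toNNReal (s^2)) := by
    have hc : (fun x : ℝ => s * x + m) = (fun x => x + m) ∘ (fun x => s * x) := rfl
    rw [hc, ← Measure.map_map (f := fun x : ℝ => s * x) (g := fun x : ℝ => x + m)
        (by fun_prop) (by fun_prop),
      gaussianReal_map_const_mul, gaussianReal_map_add_const]
    norm_num
    congr 1
    ext
    simp [Real.coe_toNNReal _ (sq_nonneg s)]
  rw [← h1, Measure.map_apply ((measurable_id'.const_mul s).add_const m) hS]

lemma preimage_Ioo (s m a b : ℝ) (hs : 0 < s) :
    (fun x => s * x + m) ⁻¹' Set.Ioo a b = Set.Ioo ((a-m)/s) ((b-m)/s) := by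
  ext x
  simp only [Set.mem_preimage, Set.mem_Ioo, div_lt_iff₀ hs, lt_div_iff₀ hs]
  constructor <;> intro ⟨h1, h2⟩ <;> constructor <;> nlinarith


/-- piecewise formula for CR_a: the N(θ, σ²/n)-probability of the event
{|x − θ| < z_{α/2}σ̃(θ)/√n and |x| > ν} equals CR_a(θ, ν). -/
theorem CRa_eq_prob (n : ℕ) (hn : 1 ≤ n) (σ lam α za θ ν : ℝ)
    (hσ : 0 < σ) (hlam : 0 < lam) (hα : α ∈ Set.Ioo (0:ℝ) 1)
    (hza : Phi (-za) = α / 2) (hθ : 0 < θ) (hν : 0 ≤ ν) :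
    ((gaussianReal θ (Real.toNNReal (σ^2 / n)))
        {x : ℝ | |x - θ| < za * sigTilde lam σ θ / Real.sqrt n ∧ ν < |x|}).toReal
      = CRa n σ lam za θ ν := by
  have hn0 : (0:ℝ) < n := by exact_mod_cast hn
  have hsn0 : 0 < Real.sqrt n := Real.sqrt_pos.2 hn0
  set sn : ℝ := Real.sqrt n with hsn
  set st : ℝ := sigTilde lam σ θ with hst
  have hstpos : 0 < st := by
    rw [hst, sigTilde, if_neg hθ.ne']
    have : 0 < 1 + lam / θ ^ 2 := by positivity
    positivity
  have hza0 : 0 < za := by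
    by_contra h
    push_neg at h
    have h2 : Phi 0 ≤ Phi (-za) := phi_mono (by linarith)
    rw [Phi_zero, hza] at h2
    linarith [hα.2]
  set r : ℝ := za * st / sn with hr
  have hrpos : 0 < r := by positivity
  set s : ℝ := σ / sn with hs
  have hs0 : 0 < s := div_pos hσ hsn0
  have hvar : Real.toNNReal (σ^2/n) = Real.toNNReal (s^2) := by
    congr 1
    rw [hs, div_pow, hsn, Real.sq_sqrt hn0.le]
  -- argument simplifications
  have hdivs : ∀ x : ℝ, x / s = sn * x / σ := by
    intro x
    rw [hs, div_div_eq_mul_div, mul_comm]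
  have hrs : r / s = za * st / σ := by
    rw [hr, hs]
    field_simp
  -- main case analysis
  rw [CRa, ← hst, ← hsn]
  by_cases hA : θ < |ν - za * st / sn|
  · rw [if_pos hA]
    rw [← hr] at hA ⊢
    by_cases hB : ν < r
    · rw [if_pos hB, mul_one]
      rw [abs_of_neg (by linarith)] at hA
      -- θ < r - ν ; event = Ioo (θ-r) (-ν) ∪ Ioo ν (θ+r)
      have hset : {x : ℝ | |x - θ| < r ∧ ν < |x|}
          = Set.Ioo (θ - r) (-ν) ∪ Set.Ioo ν (θ + r) := by
        ext x
        simp only [Set.mem_setOf_eq, abs_sub_lt_iff, lt_abs, Set.mem_union, Set.mem_Ioo]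
        constructor
        · rintro ⟨⟨h1, h2⟩, h3 | h3⟩
          · right; exact ⟨h3, by linarith⟩
          · left; exact ⟨by linarith, by linarith⟩
        · rintro (⟨h1, h2⟩ | ⟨h1, h2⟩)
          · exact ⟨⟨by linarith, by linarith⟩, Or.inr (by linarith)⟩
          · exact ⟨⟨by linarith, by linarith⟩, Or.inl h1⟩
      rw [hset, hvar, gauss_affine θ s hs0 (by measurability),
        Set.preimage_union, preimage_Ioo _ _ _ _ hs0, preimage_Ioo _ _ _ _ hs0,
        measure_union ?hd (measurableSet_Ioo),
        ENNReal.toReal_add (measure_ne_top _ _) (measure_ne_top _ _),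
        gauss_Ioo _ _ (by rw [div_le_div_iff_of_pos_right hs0]; linarith),
        gauss_Ioo _ _ (by rw [div_le_div_iff_of_pos_right hs0]; linarith)]
      case hd =>
        rw [Set.disjoint_left]
        rintro x ⟨_, hx2⟩ ⟨hx3, _⟩
        simp only [Set.mem_Ioo] at *
        have hle := (div_le_div_iff_of_pos_right hs0).mpr (show -ν - θ ≤ ν - θ by linarith)
        linarith
      have e1 : (-ν - θ) / s = sn * (-θ - ν) / σ := by rw [hdivs]; ring_nf
      have e2 : (θ - r - θ) / s = -(za * st / σ) := by
        rw [show θ - r - θ = -r by ring, neg_div, hrs]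
      have e3 : (θ + r - θ) / s = za * st / σ := by
        rw [show θ + r - θ = r by ring, hrs]
      have e4 : (ν - θ) / s = -(sn * (θ - ν) / σ) := by rw [hdivs]; ring_nf
      rw [e1, e2, e3, e4, Phi_neg (za * st / σ), Phi_neg (sn * (θ - ν) / σ)]
      rw [Ps, ← hsn]
      ring_nf
    · rw [if_neg hB, mul_zero]
      push_neg at hB
      rw [abs_of_nonneg (by linarith)] at hA
      -- event is empty
      have hset : {x : ℝ | |x - θ| < r ∧ ν < |x|} = (∅ : Set ℝ) := by
        ext x
        simp only [Set.mem_setOf_eq, abs_sub_lt_iff, lt_abs, Set.mem_empty_iff_false,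
          iff_false, not_and, not_or]
        rintro ⟨h1, h2⟩
        constructor <;> push_neg <;> [skip; skip] <;> linarith
      rw [hset]
      simp
  · rw [if_neg hA, ← hr] at *
    push_neg at hA
    rw [abs_le] at hA
    obtain ⟨hA1, hA2⟩ := hA
    by_cases hC : θ ≤ ν + r
    · rw [if_pos hC]
      -- event = Ioo ν (θ+r)
      have hset : {x : ℝ | |x - θ| < r ∧ ν < |x|} = Set.Ioo ν (θ + r) := by
        ext x
        simp only [Set.mem_setOf_eq, abs_sub_lt_iff, lt_abs, Set.mem_Ioo]
        constructor
        · rintro ⟨⟨h1, h2⟩, h3 | h3⟩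
          · exact ⟨h3, by linarith⟩
          · exact absurd h3 (by linarith)
        · rintro ⟨h1, h2⟩
          exact ⟨⟨by linarith, by linarith⟩, Or.inl h1⟩
      rw [hset, hvar, gauss_affine θ s hs0 measurableSet_Ioo, preimage_Ioo _ _ _ _ hs0,
        gauss_Ioo _ _ (by rw [div_le_div_iff_of_pos_right hs0]; linarith)]
      have e3 : (θ + r - θ) / s = za * st / σ := by
        rw [show θ + r - θ = r by ring, hrs]
      have e4 : (ν - θ) / s = sn * (ν - θ) / σ := hdivs _
      rw [e3, e4]
    · rw [if_neg hC]
      push_neg at hC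
      -- event = Ioo (θ-r) (θ+r)
      have hset : {x : ℝ | |x - θ| < r ∧ ν < |x|} = Set.Ioo (θ - r) (θ + r) := by
        ext x
        simp only [Set.mem_setOf_eq, abs_sub_lt_iff, lt_abs, Set.mem_Ioo]
        constructor
        · rintro ⟨⟨h1, h2⟩, _⟩
          exact ⟨by linarith, by linarith⟩
        · rintro ⟨h1, h2⟩
          exact ⟨⟨by linarith, by linarith⟩, Or.inl (by linarith)⟩
      rw [hset, hvar, gauss_affine θ s hs0 measurableSet_Ioo, preimage_Ioo _ _ _ _ hs0,
        gauss_Ioo _ _ (by rw [div_le_div_iff_of_pos_right hs0]; linarith)]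
      have e2 : (θ - r - θ) / s = -(za * st / σ) := by
        rw [show θ - r - θ = -r by ring, neg_div, hrs]
      have e3 : (θ + r - θ) / s = za * st / σ := by
        rw [show θ + r - θ = r by ring, hrs]
      rw [e2, e3, Phi_neg (za * st / σ)]
      ring
end

section
/- (Monotonicity of CR_b/P_s.) Fix an integer n ≥ 1, σ > 0, α ∈ (0,1), and a fixed ν > 0. Define G(θ) = CR_b(θ, ν)/P_s(θ, ν) for θ ≥ 0. Then G is (a) non-decreasing on [0, |ν − z_{α/2}σ/√n|]; (b) strictly increasing on (|ν − z_{α/2}σ/√n|, ν + z_{α/2}σ/√n); and (c) strictly decreasing on [ν + z_{α/2}σ/√n, ∞). -/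
open MeasureTheory ProbabilityTheory

open Real Set

lemma Phi_eq (x : ℝ) : Phi x = ∫ t in Set.Iic x, gaussianPDFReal 0 1 t := by
  rw [Phi, gaussianReal_apply_eq_integral 0 one_ne_zero,
    ENNReal.toReal_ofReal (integral_nonneg fun t => gaussianPDFReal_nonneg 0 1 t)]

lemma continuous_stdPdf : Continuous (gaussianPDFReal 0 1) := by
  unfold gaussianPDFReal
  fun_prop

lemma stdPdf_pos (x : ℝ) : 0 < gaussianPDFReal 0 1 x :=
  gaussianPDFReal_pos 0 1 x one_ne_zero

lemma stdPdf_even (x : ℝ) : gaussianPDFReal 0 1 (-x) = gaussianPDFReal 0 1 x := by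
  unfold gaussianPDFReal; ring_nf

lemma integrableOn_stdPdf (s : Set ℝ) : IntegrableOn (gaussianPDFReal 0 1) s :=
  (integrable_gaussianPDFReal 0 1).integrableOn

lemma hasDerivAt_Phi (x : ℝ) : HasDerivAt Phi (gaussianPDFReal 0 1 x) x := by
  have key : ∀ y : ℝ, Phi y = (∫ t in Set.Iic (0:ℝ), gaussianPDFReal 0 1 t)
      + ∫ t in (0:ℝ)..y, gaussianPDFReal 0 1 t := by
    intro y
    rw [Phi_eq, ← intervalIntegral.integral_Iic_sub_Iic (integrableOn_stdPdf _)
      (integrableOn_stdPdf _)]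
    ring
  have h : HasDerivAt (fun y => (∫ t in Set.Iic (0:ℝ), gaussianPDFReal 0 1 t)
      + ∫ t in (0:ℝ)..y, gaussianPDFReal 0 1 t) (gaussianPDFReal 0 1 x) x := by
    refine HasDerivAt.const_add _ ?_
    exact intervalIntegral.integral_hasDerivAt_right
      ((integrable_gaussianPDFReal 0 1).intervalIntegrable)
      (continuous_stdPdf.stronglyMeasurable.stronglyMeasurableAtFilter)
      continuous_stdPdf.continuousAt
  exact h.congr_of_eventuallyEq (Filter.Eventually.of_forall fun y => (key y))

lemma Phi_strictMono : StrictMono Phi :=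
  strictMono_of_hasDerivAt_pos hasDerivAt_Phi stdPdf_pos

lemma Phi_nonneg (x : ℝ) : 0 ≤ Phi x := by
  rw [Phi_eq]; exact integral_nonneg fun t => gaussianPDFReal_nonneg 0 1 t

lemma Phi_pos (x : ℝ) : 0 < Phi x := by
  have h : Phi x - Phi (x - 1) = ∫ t in (x-1)..x, gaussianPDFReal 0 1 t := by
    rw [Phi_eq, Phi_eq]
    exact intervalIntegral.integral_Iic_sub_Iic (integrableOn_stdPdf _) (integrableOn_stdPdf _)
  have hpos : 0 < ∫ t in (x-1)..x, gaussianPDFReal 0 1 t :=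
    intervalIntegral.intervalIntegral_pos_of_pos
      ((integrable_gaussianPDFReal 0 1).intervalIntegrable) stdPdf_pos (by linarith)
  nlinarith [Phi_nonneg (x - 1)]

lemma Phi_neg_add (x : ℝ) : Phi (-x) + Phi x = 1 := by
  have h1 : Phi (-x) = ∫ t in Set.Ioi x, gaussianPDFReal 0 1 t := by
    rw [Phi_eq]
    rw [show ∫ t in Set.Iic (-x), gaussianPDFReal 0 1 t
        = ∫ t in Set.Iic (-x), gaussianPDFReal 0 1 (-t) from
      setIntegral_congr_fun measurableSet_Iic fun t _ => (stdPdf_even t).symm]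
    rw [integral_comp_neg_Iic, neg_neg]
  rw [h1, Phi_eq, add_comm]
  rw [intervalIntegral.integral_Iic_add_Ioi (integrableOn_stdPdf _) (integrableOn_stdPdf _)]
  exact integral_gaussianPDFReal_eq_one 0 one_ne_zero

lemma Phi_lt_one (x : ℝ) : Phi x < 1 := by
  have := Phi_neg_add x
  have := Phi_pos (-x)
  linarith

lemma continuous_Phi : Continuous Phi := by
  have h : Differentiable ℝ Phi := fun x => (hasDerivAt_Phi x).differentiableAt
  exact h.continuous

lemma stdPdf_lt_stdPdf {a b : ℝ} (h : b ^ 2 < a ^ 2) :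
    gaussianPDFReal 0 1 a < gaussianPDFReal 0 1 b := by
  unfold gaussianPDFReal
  have hpos : (0:ℝ) < (Real.sqrt (2 * π * ((1:NNReal):ℝ)))⁻¹ := by
    rw [NNReal.coe_one]
    have := Real.pi_pos
    positivity
  refine mul_lt_mul_of_pos_left ?_ hpos
  apply Real.exp_lt_exp.mpr
  rw [NNReal.coe_one]
  rw [div_lt_div_iff₀ (by norm_num) (by norm_num)]
  nlinarith

lemma hasDerivAt_Ps (n : ℕ) (σ ν θ : ℝ) :
    HasDerivAt (fun θ => Ps n σ θ ν)
      (Real.sqrt n / σ * gaussianPDFReal 0 1 (Real.sqrt n * (θ - ν) / σ)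
        - Real.sqrt n / σ * gaussianPDFReal 0 1 (Real.sqrt n * (-θ - ν) / σ)) θ := by
  have h1 : HasDerivAt (fun θ : ℝ => Real.sqrt n * (θ - ν) / σ) (Real.sqrt n * 1 / σ) θ :=
    (((hasDerivAt_id θ).sub_const ν).const_mul _).div_const σ
  have h2 : HasDerivAt (fun θ : ℝ => Real.sqrt n * (-θ - ν) / σ) (Real.sqrt n * (-1) / σ) θ := by
    have h : HasDerivAt (fun θ : ℝ => -θ - ν) (-1) θ := ((hasDerivAt_id θ).neg).sub_const ν
    exact (h.const_mul _).div_const σ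
  have hA := (hasDerivAt_Phi (Real.sqrt n * (θ - ν) / σ)).comp θ h1
  have hB := (hasDerivAt_Phi (Real.sqrt n * (-θ - ν) / σ)).comp θ h2
  have h := hA.add hB
  simp only [Function.comp_def] at h
  unfold Ps
  exact h.congr_deriv (by ring)

lemma Ps_pos (n : ℕ) (σ θ ν : ℝ) : 0 < Ps n σ θ ν :=
  add_pos (Phi_pos _) (Phi_pos _)

lemma continuous_Ps (n : ℕ) (σ ν : ℝ) : Continuous (fun θ => Ps n σ θ ν) := by
  have h : Differentiable ℝ (fun θ => Ps n σ θ ν) :=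
    fun θ => (hasDerivAt_Ps n σ ν θ).differentiableAt
  exact h.continuous

set_option maxHeartbeats 1000000 in
/-- Monotonicity of CR_b/P_s: for a fixed ν > 0, the function
G(θ) = CR_b(θ,ν)/P_s(θ,ν) is non-decreasing on [0, |ν − z_{α/2}σ/√n|], strictly
increasing on (|ν − z_{α/2}σ/√n|, ν + z_{α/2}σ/√n), and strictly decreasing on
[ν + z_{α/2}σ/√n, ∞). -/
theorem CRb_over_Ps_monotone (n : ℕ) (hn : 1 ≤ n) (σ α za ν : ℝ)
    (hσ : 0 < σ) (hα : α ∈ Set.Ioo (0:ℝ) 1)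
    (hza : Phi (-za) = α / 2) (hν : 0 < ν) :
    MonotoneOn (fun θ : ℝ => CRb n σ α za θ ν / Ps n σ θ ν)
      (Set.Icc 0 |ν - za * σ / Real.sqrt n|) ∧
    StrictMonoOn (fun θ : ℝ => CRb n σ α za θ ν / Ps n σ θ ν)
      (Set.Ioo |ν - za * σ / Real.sqrt n| (ν + za * σ / Real.sqrt n)) ∧
    StrictAntiOn (fun θ : ℝ => CRb n σ α za θ ν / Ps n σ θ ν)
      (Set.Ici (ν + za * σ / Real.sqrt n)) := by
  obtain ⟨hα0, hα1⟩ := hα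
  have hn0 : (0:ℝ) < n := by
    have h : 0 < n := hn
    exact_mod_cast h
  have hsn : 0 < Real.sqrt n := Real.sqrt_pos.mpr hn0
  have hPhi0 : Phi 0 = 1/2 := by have h := Phi_neg_add 0; rw [neg_zero] at h; linarith
  have hza_pos : 0 < za := by
    by_contra h
    push_neg at h
    have h2 : Phi 0 ≤ Phi (-za) := Phi_strictMono.monotone (by linarith)
    rw [hPhi0, hza] at h2; linarith
  have hc_pos : 0 < za * σ / Real.sqrt n := by positivity
  have hPhiza : Phi za = 1 - α/2 := by have h := Phi_neg_add za; rw [hza] at h; linarith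
  set c := za * σ / Real.sqrt n with hc_def
  have hkc : Real.sqrt n * c / σ = za := by rw [hc_def]; field_simp
  have hpdf_lt : ∀ θ : ℝ, 0 < θ → gaussianPDFReal 0 1 (Real.sqrt n * (-θ - ν) / σ)
      < gaussianPDFReal 0 1 (Real.sqrt n * (θ - ν) / σ) := by
    intro θ hθ
    apply stdPdf_lt_stdPdf
    have h1 : (Real.sqrt n * (-θ - ν) / σ)^2 - (Real.sqrt n * (θ - ν) / σ)^2
        = (Real.sqrt n / σ)^2 * (4 * (θ * ν)) := by ring
    have h2 : 0 < (Real.sqrt n / σ)^2 * (4 * (θ * ν)) :=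
      mul_pos (pow_pos (div_pos hsn hσ) 2) (by nlinarith)
    linarith
  have hPs'_pos : ∀ θ : ℝ, 0 < θ →
      0 < Real.sqrt n / σ * gaussianPDFReal 0 1 (Real.sqrt n * (θ - ν) / σ)
        - Real.sqrt n / σ * gaussianPDFReal 0 1 (Real.sqrt n * (-θ - ν) / σ) := by
    intro θ hθ
    have hk : 0 < Real.sqrt n / σ := div_pos hsn hσ
    have h := hpdf_lt θ hθ
    nlinarith
  have hPsne : ∀ θ : ℝ, Ps n σ θ ν ≠ 0 := fun θ => (Ps_pos n σ θ ν).ne'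
  have habs_lt : |ν - c| < ν + c := abs_lt.mpr ⟨by linarith, by linarith⟩
  -- Part (c)
  have hCRb3 : ∀ θ : ℝ, θ ∈ Set.Ici (ν + c) → CRb n σ α za θ ν = 1 - α := by
    intro θ hθ
    rw [Set.mem_Ici] at hθ
    simp only [CRb]
    rw [← hc_def]
    rw [if_neg (not_lt.mpr (by linarith))]
    by_cases h : θ ≤ ν + c
    · have hθeq : θ = ν + c := le_antisymm h hθ
      rw [if_pos h, hθeq]
      have harg : Real.sqrt n * (ν - (ν + c)) / σ = -za := by
        rw [show ν - (ν + c) = -c by ring, ← hkc]; ring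
      rw [harg, hza]; ring
    · rw [if_neg h]
  have hH3 : StrictAntiOn (fun θ : ℝ => (1 - α) / Ps n σ θ ν) (Set.Ici (ν + c)) := by
    apply strictAntiOn_of_deriv_neg (convex_Ici _)
    · exact (continuous_const.div (continuous_Ps n σ ν) hPsne).continuousOn
    · intro x hx
      rw [interior_Ici, Set.mem_Ioi] at hx
      have hd := (hasDerivAt_const x (1 - α)).div (hasDerivAt_Ps n σ ν x) (hPsne x)
      rw [HasDerivAt.deriv (f := fun θ : ℝ => (1 - α) / Ps n σ θ ν) hd]
      apply div_neg_of_neg_of_pos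
      · have h1 := hPs'_pos x (by linarith)
        nlinarith [Ps_pos n σ x ν, mul_pos (sub_pos.mpr hα1) h1]
      · exact pow_pos (Ps_pos n σ x ν) 2
  have part3 : StrictAntiOn (fun θ : ℝ => CRb n σ α za θ ν / Ps n σ θ ν)
      (Set.Ici (ν + c)) := by
    intro x hx y hy hxy
    have h := hH3 hx hy hxy
    show CRb n σ α za y ν / Ps n σ y ν < CRb n σ α za x ν / Ps n σ x ν
    rw [hCRb3 x hx, hCRb3 y hy]; exact h
  -- Part (b)
  have hCRb2 : ∀ θ : ℝ, θ ∈ Set.Ioo |ν - c| (ν + c) →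
      CRb n σ α za θ ν = 1 - α/2 - Phi (Real.sqrt n * (ν - θ) / σ) := by
    intro θ hθ
    simp only [CRb]
    rw [← hc_def]
    rw [if_neg (not_lt.mpr hθ.1.le), if_pos hθ.2.le]
  have hH2 : StrictMonoOn
      (fun θ : ℝ => (1 - α/2 - Phi (Real.sqrt n * (ν - θ) / σ)) / Ps n σ θ ν)
      (Set.Ioo |ν - c| (ν + c)) := by
    apply strictMonoOn_of_deriv_pos (convex_Ioo _ _)
    · apply ContinuousOn.div
      · apply Continuous.continuousOn
        exact continuous_const.sub (continuous_Phi.comp (by fun_prop))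
      · exact (continuous_Ps n σ ν).continuousOn
      · exact fun x _ => hPsne x
    · intro x hx
      rw [interior_Ioo, Set.mem_Ioo] at hx
      have hin : HasDerivAt (fun θ : ℝ => Real.sqrt n * (ν - θ) / σ)
          (Real.sqrt n * (-1) / σ) x := by
        have h : HasDerivAt (fun θ : ℝ => ν - θ) (-1) x := (hasDerivAt_id x).const_sub ν
        exact (h.const_mul _).div_const σ
      have hNum : HasDerivAt (fun θ : ℝ => 1 - α/2 - Phi (Real.sqrt n * (ν - θ) / σ))
          (0 - gaussianPDFReal 0 1 (Real.sqrt n * (ν - x) / σ) * (Real.sqrt n * (-1) / σ))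
          x := by
        have h := (hasDerivAt_Phi (Real.sqrt n * (ν - x) / σ)).comp x hin
        simp only [Function.comp_def] at h
        exact (hasDerivAt_const x (1 - α/2)).sub h
      have hd := hNum.div (hasDerivAt_Ps n σ ν x) (hPsne x)
      rw [HasDerivAt.deriv (f := fun θ : ℝ => (1 - α/2 - Phi (Real.sqrt n * (ν - θ) / σ)) / Ps n σ θ ν) hd]
      apply div_pos _ (pow_pos (Ps_pos n σ x ν) 2)
      have hflip : Real.sqrt n * (ν - x) / σ = -(Real.sqrt n * (x - ν) / σ) := by ring
      have hf3 : gaussianPDFReal 0 1 (Real.sqrt n * (ν - x) / σ)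
          = gaussianPDFReal 0 1 (Real.sqrt n * (x - ν) / σ) := by rw [hflip, stdPdf_even]
      have hΦ3 : Phi (Real.sqrt n * (ν - x) / σ) = 1 - Phi (Real.sqrt n * (x - ν) / σ) := by
        have h := Phi_neg_add (Real.sqrt n * (x - ν) / σ)
        rw [hflip]; linarith
      have hx1 : ν - x < c := by
        have h := le_abs_self (ν - c)
        linarith [hx.1]
      have ha3lt : Real.sqrt n * (ν - x) / σ < za := by
        rw [← hkc]
        gcongr
      have hΦ1gt : α/2 < Phi (Real.sqrt n * (x - ν) / σ) := by
        have h := Phi_strictMono ha3lt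
        rw [hΦ3, hPhiza] at h; linarith
      rw [hf3, hΦ3]
      unfold Ps
      set F1 := gaussianPDFReal 0 1 (Real.sqrt n * (x - ν) / σ) with hF1
      set F2 := gaussianPDFReal 0 1 (Real.sqrt n * (-x - ν) / σ) with hF2
      set A := Phi (Real.sqrt n * (x - ν) / σ) with hA
      set B := Phi (Real.sqrt n * (-x - ν) / σ) with hB
      have hF1p : 0 < F1 := stdPdf_pos _
      have hF2p : 0 < F2 := stdPdf_pos _
      have hBp : 0 < B := Phi_pos _
      have hk : 0 < Real.sqrt n / σ := div_pos hsn hσ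
      have e : (0 - F1 * (Real.sqrt n * -1 / σ)) * (A + B)
          - (1 - α/2 - (1 - A)) * (Real.sqrt n / σ * F1 - Real.sqrt n / σ * F2)
          = Real.sqrt n / σ * F1 * B + Real.sqrt n / σ * F1 * (α/2)
            + Real.sqrt n / σ * F2 * (A - α/2) := by ring
      rw [e]
      exact add_pos (add_pos (mul_pos (mul_pos hk hF1p) hBp)
        (mul_pos (mul_pos hk hF1p) (half_pos hα0)))
        (mul_pos (mul_pos hk hF2p) (sub_pos.mpr hΦ1gt))
  have part2 : StrictMonoOn (fun θ : ℝ => CRb n σ α za θ ν / Ps n σ θ ν)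
      (Set.Ioo |ν - c| (ν + c)) := by
    intro x hx y hy hxy
    have h := hH2 hx hy hxy
    show CRb n σ α za x ν / Ps n σ x ν < CRb n σ α za y ν / Ps n σ y ν
    rw [hCRb2 x hx, hCRb2 y hy]; exact h
  -- Part (a)
  have part1 : MonotoneOn (fun θ : ℝ => CRb n σ α za θ ν / Ps n σ θ ν)
      (Set.Icc 0 |ν - c|) := by
    by_cases hvc : ν < c
    · have habs : |ν - c| = c - ν := by rw [abs_of_neg (by linarith)]; ring
      have hEq : ∀ θ : ℝ, θ ∈ Set.Icc 0 |ν - c| → CRb n σ α za θ ν = Ps n σ θ ν - α := by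
        intro θ hθ
        simp only [CRb]
        rw [← hc_def]
        by_cases hlt : θ < |ν - c|
        · rw [if_pos hlt, if_pos hvc]; ring
        · rw [if_neg hlt]
          have hθeq : θ = c - ν := by
            rw [habs] at hlt
            push_neg at hlt
            rw [habs] at hθ
            exact le_antisymm hθ.2 hlt
          rw [if_pos (show θ ≤ ν + c by rw [hθeq]; linarith), hθeq]
          have h1 : Real.sqrt n * (-(c - ν) - ν) / σ = -za := by
            rw [show -(c - ν) - ν = -c by ring, ← hkc]; ring
          have h2 : Real.sqrt n * (ν - (c - ν)) / σ
              = -(Real.sqrt n * ((c - ν) - ν) / σ) := by ring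
          have h3 := Phi_neg_add (Real.sqrt n * ((c - ν) - ν) / σ)
          unfold Ps
          rw [h1, hza, h2]
          linarith
      have hPsmono : MonotoneOn (fun θ => Ps n σ θ ν) (Set.Ici 0) := by
        apply monotoneOn_of_deriv_nonneg (convex_Ici 0) (continuous_Ps n σ ν).continuousOn
        · exact fun x _ => (hasDerivAt_Ps n σ ν x).differentiableAt.differentiableWithinAt
        · intro x hx
          rw [interior_Ici, Set.mem_Ioi] at hx
          rw [(hasDerivAt_Ps n σ ν x).deriv]
          exact le_of_lt (hPs'_pos x hx)
      intro x hx y hy hxy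
      have hle : Ps n σ x ν ≤ Ps n σ y ν :=
        hPsmono (Set.mem_Ici.mpr hx.1) (Set.mem_Ici.mpr hy.1) hxy
      show CRb n σ α za x ν / Ps n σ x ν ≤ CRb n σ α za y ν / Ps n σ y ν
      rw [hEq x hx, hEq y hy, div_le_div_iff₀ (Ps_pos n σ x ν) (Ps_pos n σ y ν)]
      have h2 : α * Ps n σ x ν ≤ α * Ps n σ y ν := mul_le_mul_of_nonneg_left hle hα0.le
      have e1 : (Ps n σ x ν - α) * Ps n σ y ν
          = Ps n σ x ν * Ps n σ y ν - α * Ps n σ y ν := by ring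
      have e2 : (Ps n σ y ν - α) * Ps n σ x ν
          = Ps n σ x ν * Ps n σ y ν - α * Ps n σ x ν := by ring
      linarith [h2, e1.le, e2.ge]
    · have habs : |ν - c| = ν - c := abs_of_nonneg (by push_neg at hvc; linarith)
      have hEq : ∀ θ : ℝ, θ ∈ Set.Icc 0 |ν - c| → CRb n σ α za θ ν = 0 := by
        intro θ hθ
        simp only [CRb]
        rw [← hc_def]
        by_cases hlt : θ < |ν - c|
        · rw [if_pos hlt, if_neg hvc]; ring
        · rw [if_neg hlt]
          have hθeq : θ = ν - c := by
            rw [habs] at hlt hθ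
            push_neg at hlt
            exact le_antisymm hθ.2 hlt
          rw [if_pos (show θ ≤ ν + c by rw [hθeq]; linarith), hθeq]
          have h1 : Real.sqrt n * (ν - (ν - c)) / σ = za := by
            rw [show ν - (ν - c) = c by ring]; exact hkc
          rw [h1, hPhiza]; ring
      intro x hx y hy hxy
      show CRb n σ α za x ν / Ps n σ x ν ≤ CRb n σ α za y ν / Ps n σ y ν
      rw [hEq x hx, hEq y hy]
      simp
  exact ⟨part1, part2, part3⟩
end
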